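/- The nonstandard linear-algebra face subgroup A^{33}_N = ⟨⋃_{j∈α_3}( Z̄^j_{j, j+n} ∪ Z̄^j_{j, j−|α_{12}|} )⟩ of Ker(Φ) is isomorphic, as a group, to (∏_{j∈α_3} A_j) × (∏_{j∈α_3} A_j) (that is, to (A_{α_3})²). -/

import Mathlib

namespace SB

/-- `cc n p` is the 0-based boundary of the `p`-th label sequence:
`cc n p = ⌈p·n/3⌉` for `p ≤ 3`, and `cc n p = n + ⌈(p-3)·n/3⌉` for `p ≥ 3`. -/
def cc (n p : ℕ) : ℕ := if p < 3 then (p * n + 2) / 3 else n + ((p - 3) * n + 2) / 3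

/-- The 0-based label sequence `α_{p+1}` (paper's `α_1,…,α_6` for `p = 0,…,5`)
as a finite set of coordinates in `Fin (2n)`. -/
def alphaF (n p : ℕ) : Finset (Fin (2 * n)) :=
  Finset.univ.filter (fun x => cc n p ≤ x.val ∧ x.val < cc n (p + 1))

/-- The 0-based label sequence `α_{t+1}` (for `t < 3`) as a finite set of
indices in `Fin n` (indexing the factors `A_j`). -/
def alphaN (n t : ℕ) : Finset (Fin n) :=
  Finset.univ.filter (fun x => cc n t ≤ x.val ∧ x.val < cc n (t + 1))

/-- Reduction of a natural number modulo `2n`, as an element of `Fin (2n)`. -/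
def idx {n : ℕ} (hn : 0 < n) (k : ℕ) : Fin (2 * n) := ⟨k % (2 * n), Nat.mod_lt _ (by omega)⟩

/-- Reduction of a natural number modulo `n`, as an element of `Fin n`
(this implements the paper's `j*`). -/
def idxN {n : ℕ} (hn : 0 < n) (k : ℕ) : Fin n := ⟨k % n, Nat.mod_lt _ hn⟩

/-- The set `Ȳ_i` of vectorized kernel generators: `y ∈ Y i` placed in
coordinate `i` with identity elsewhere. -/
def Ybar {n : ℕ} {G : Fin (2 * n) → Type} [∀ i, Group (G i)]
    (Y : ∀ i, Set (G i)) (i : Fin (2 * n)) : Set (∀ i', G i') :=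
  Pi.mulSingle i '' (Y i)

/-- The set `Z̄^j_{i,k}` of vectorized section generators: for `b ∈ A j`, the
element with `s j i b` in coordinate `i`, `s j k b⁻¹` in coordinate `k`, and
identity elsewhere. -/
def Zbar {n : ℕ} {A : Fin n → Type} [∀ j, CommGroup (A j)]
    {G : Fin (2 * n) → Type} [∀ i, Group (G i)]
    (s : ∀ (j : Fin n) (i : Fin (2 * n)), A j →* G i)
    (j : Fin n) (i k : Fin (2 * n)) : Set (∀ i', G i') :=
  Set.range (fun b : A j => Pi.mulSingle i (s j i b) * Pi.mulSingle k (s j k b⁻¹))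


/-! ### Auxiliary lemmas for `stmt_9` -/

lemma cc3' (n : ℕ) : cc n 3 = n := by simp [cc]

lemma mem_alphaN2' {n : ℕ} (j : Fin n) : j ∈ alphaN n 2 ↔ cc n 2 ≤ j.val := by
  have := j.isLt
  simp only [alphaN, Finset.mem_filter, Finset.mem_univ, true_and,
    show (2:ℕ)+1 = 3 from rfl, cc3']
  omega

lemma cc2_facts' {n : ℕ} (hn : 3 ≤ n) : n ≤ 2 * cc n 2 ∧ cc n 2 < n ∧ 2 ≤ cc n 2 := by
  have : cc n 2 = (2 * n + 2) / 3 := by simp [cc]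
  omega

lemma idx_eq' {n : ℕ} (hn : 0 < n) {k : ℕ} (hk : k < 2 * n) : idx hn k = ⟨k, hk⟩ :=
  Fin.ext (Nat.mod_eq_of_lt hk)

section Aux

variable {n : ℕ} {A : Fin n → Type} [∀ j, CommGroup (A j)]
  {G : Fin (2 * n) → Type} [∀ i, Group (G i)]

/-- The underlying map of the isomorphism, sending a pair `(a, b)` of tuples
indexed by `α₃` to the element of the big product group having
`s j j (a_j b_j)` in coordinate `j`, `s j (j+n) (a_j)⁻¹` in coordinate `j+n`,
and `s j (j - |α₁₂|) (b_j)⁻¹` in coordinate `j - |α₁₂|`. -/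
def fraw (s : ∀ (j : Fin n) (i : Fin (2 * n)), A j →* G i)
    (p : (∀ j : ↥(alphaN n 2), A j.1) × (∀ j : ↥(alphaN n 2), A j.1)) :
    ∀ i, G i := fun i =>
  if h1 : cc n 2 ≤ i.val ∧ i.val < n then
    s ⟨i.val, h1.2⟩ i (p.1 ⟨⟨i.val, h1.2⟩, (mem_alphaN2' _).2 h1.1⟩ *
                       p.2 ⟨⟨i.val, h1.2⟩, (mem_alphaN2' _).2 h1.1⟩)
  else if h2 : n + cc n 2 ≤ i.val then
    (s ⟨i.val - n, by have := i.isLt; omega⟩ i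
      (p.1 ⟨⟨i.val - n, by have := i.isLt; omega⟩,
        (mem_alphaN2' _).2 (show cc n 2 ≤ i.val - n by omega)⟩))⁻¹
  else if h3 : i.val < n - cc n 2 then
    (s ⟨i.val + cc n 2, by omega⟩ i
      (p.2 ⟨⟨i.val + cc n 2, by omega⟩,
        (mem_alphaN2' _).2 (Nat.le_add_left _ _)⟩))⁻¹
  else 1

section apply
variable (s : ∀ (j : Fin n) (i : Fin (2 * n)), A j →* G i)
  (p₁ p₂ : ∀ j : ↥(alphaN n 2), A j.1)

lemma fraw_apply_mid (jm : Fin n) (hm : cc n 2 ≤ jm.val)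
    (i : Fin (2 * n)) (hi : i.val = jm.val) :
    fraw s (p₁, p₂) i
      = s jm i (p₁ ⟨jm, (mem_alphaN2' _).2 hm⟩ * p₂ ⟨jm, (mem_alphaN2' _).2 hm⟩) := by
  have h2n : jm.val < 2 * n := by have := jm.isLt; omega
  have hE : i = ⟨jm.val, h2n⟩ := Fin.ext hi
  subst hE
  exact dif_pos ⟨hm, jm.isLt⟩

lemma fraw_apply_top (jm : Fin n) (hm : cc n 2 ≤ jm.val)
    (i : Fin (2 * n)) (hi : i.val = jm.val + n) :
    fraw s (p₁, p₂) i = (s jm i (p₁ ⟨jm, (mem_alphaN2' _).2 hm⟩))⁻¹ := by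
  have hjn := jm.isLt
  have h2n : jm.val + n < 2 * n := by omega
  have hE : i = ⟨jm.val + n, h2n⟩ := Fin.ext hi
  subst hE
  have key : ∀ (m : ℕ) (hmlt : m < n) (hm2 : cc n 2 ≤ m), m = jm.val →
      (s ⟨m, hmlt⟩ ⟨jm.val + n, h2n⟩
        (p₁ ⟨⟨m, hmlt⟩, (mem_alphaN2' _).2 hm2⟩))⁻¹
      = (s jm ⟨jm.val + n, h2n⟩ (p₁ ⟨jm, (mem_alphaN2' _).2 hm⟩))⁻¹ := by
    intro m hmlt hm2 e
    subst e
    rfl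
  calc fraw s (p₁, p₂) ⟨jm.val + n, h2n⟩
      = (s ⟨jm.val + n - n, by omega⟩ ⟨jm.val + n, h2n⟩
          (p₁ ⟨⟨jm.val + n - n, by omega⟩,
            (mem_alphaN2' _).2 (show cc n 2 ≤ jm.val + n - n by omega)⟩))⁻¹ :=
        (dif_neg (show ¬(cc n 2 ≤ jm.val + n ∧ jm.val + n < n) by omega)).trans
          (dif_pos (show n + cc n 2 ≤ jm.val + n by omega))
    _ = _ := key _ (by omega) (by omega) (by omega)

lemma fraw_apply_low (hn : 3 ≤ n) (jm : Fin n) (hm : cc n 2 ≤ jm.val)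
    (i : Fin (2 * n)) (hi : i.val = jm.val - cc n 2) :
    fraw s (p₁, p₂) i = (s jm i (p₂ ⟨jm, (mem_alphaN2' _).2 hm⟩))⁻¹ := by
  have hjn := jm.isLt
  obtain ⟨h2c, hclt, hc2⟩ := cc2_facts' hn
  have h2n : jm.val - cc n 2 < 2 * n := by omega
  have hE : i = ⟨jm.val - cc n 2, h2n⟩ := Fin.ext hi
  subst hE
  have key : ∀ (m : ℕ) (hmlt : m < n) (hm2 : cc n 2 ≤ m), m = jm.val →
      (s ⟨m, hmlt⟩ ⟨jm.val - cc n 2, h2n⟩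
        (p₂ ⟨⟨m, hmlt⟩, (mem_alphaN2' _).2 hm2⟩))⁻¹
      = (s jm ⟨jm.val - cc n 2, h2n⟩ (p₂ ⟨jm, (mem_alphaN2' _).2 hm⟩))⁻¹ := by
    intro m hmlt hm2 e
    subst e
    rfl
  calc fraw s (p₁, p₂) ⟨jm.val - cc n 2, h2n⟩
      = (s ⟨jm.val - cc n 2 + cc n 2, by omega⟩ ⟨jm.val - cc n 2, h2n⟩
          (p₂ ⟨⟨jm.val - cc n 2 + cc n 2, by omega⟩,
            (mem_alphaN2' _).2 (Nat.le_add_left _ _)⟩))⁻¹ :=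
        ((dif_neg (show ¬(cc n 2 ≤ jm.val - cc n 2 ∧ jm.val - cc n 2 < n) by omega)).trans
          (dif_neg (show ¬(n + cc n 2 ≤ jm.val - cc n 2) by omega))).trans
          (dif_pos (show jm.val - cc n 2 < n - cc n 2 by omega))
    _ = _ := key _ (by omega) (by omega) (by omega)

lemma fraw_apply_out (i : Fin (2 * n))
    (h1 : ¬(cc n 2 ≤ i.val ∧ i.val < n)) (h2 : ¬(n + cc n 2 ≤ i.val))
    (h3 : ¬(i.val < n - cc n 2)) :
    fraw s (p₁, p₂) i = 1 :=
  ((dif_neg h1).trans (dif_neg h2)).trans (dif_neg h3)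

end apply

lemma single_same' {j : Fin n} {hj hj' : j ∈ alphaN n 2} (b : A j) :
    Pi.mulSingle (M := fun t : ↥(alphaN n 2) => A t.1) ⟨j, hj⟩ b ⟨j, hj'⟩ = b :=
  Pi.mulSingle_eq_same _ _

lemma single_ne' {j k : Fin n} (hj : j ∈ alphaN n 2) (hk : k ∈ alphaN n 2)
    (hne : k.val ≠ j.val) (b : A j) :
    Pi.mulSingle (M := fun t : ↥(alphaN n 2) => A t.1) ⟨j, hj⟩ b ⟨k, hk⟩ = 1 :=
  Pi.mulSingle_eq_of_ne (M := fun t : ↥(alphaN n 2) => A t.1)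
    (i := ⟨j, hj⟩) (i' := ⟨k, hk⟩)
    (fun h => hne (congrArg (fun t : ↥(alphaN n 2) => t.1.1) h)) b

lemma fraw_single_left (hn : 3 ≤ n) (s : ∀ (j : Fin n) (i : Fin (2 * n)), A j →* G i)
    (j : Fin n) (hj : j ∈ alphaN n 2) (b : A j) :
    fraw s (Pi.mulSingle ⟨j, hj⟩ b, 1)
      = Pi.mulSingle (⟨j.val, by have := j.isLt; omega⟩ : Fin (2 * n))
          (s j ⟨j.val, by have := j.isLt; omega⟩ b)
        * Pi.mulSingle (⟨j.val + n, by have := j.isLt; omega⟩ : Fin (2 * n))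
            (s j ⟨j.val + n, by have := j.isLt; omega⟩ b⁻¹) := by
  have hc := (mem_alphaN2' j).1 hj
  have hjn := j.isLt
  obtain ⟨h2c, hclt, hc2⟩ := cc2_facts' hn
  have hj2 : j.val < 2 * n := by omega
  have hjn2 : j.val + n < 2 * n := by omega
  funext i
  rw [Pi.mul_apply]
  by_cases hij : i.val = j.val
  · have hE : i = ⟨j.val, hj2⟩ := Fin.ext hij
    subst hE
    rw [fraw_apply_mid s _ _ j hc _ rfl, single_same', Pi.one_apply, mul_one,
      Pi.mulSingle_eq_same,
      Pi.mulSingle_eq_of_ne (show (⟨j.val, hj2⟩ : Fin (2 * n)) ≠ ⟨j.val + n, hjn2⟩ by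
        simp only [ne_eq, Fin.mk.injEq]; omega), mul_one]
  · by_cases hij2 : i.val = j.val + n
    · have hE : i = ⟨j.val + n, hjn2⟩ := Fin.ext hij2
      subst hE
      rw [fraw_apply_top s _ _ j hc _ rfl, single_same', ← map_inv,
        Pi.mulSingle_eq_of_ne (show (⟨j.val + n, hjn2⟩ : Fin (2 * n)) ≠ ⟨j.val, hj2⟩ by
          simp only [ne_eq, Fin.mk.injEq]; omega), one_mul, Pi.mulSingle_eq_same]
    · rw [Pi.mulSingle_eq_of_ne (show i ≠ ⟨j.val, hj2⟩ from
          fun h => hij (congrArg Fin.val h)),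
        Pi.mulSingle_eq_of_ne (show i ≠ ⟨j.val + n, hjn2⟩ from
          fun h => hij2 (congrArg Fin.val h)), one_mul]
      by_cases hm : cc n 2 ≤ i.val ∧ i.val < n
      · rw [fraw_apply_mid s _ _ ⟨i.val, hm.2⟩ hm.1 i rfl,
          single_ne' hj _ (show i.val ≠ j.val from hij), Pi.one_apply, mul_one, map_one]
      · by_cases ht : n + cc n 2 ≤ i.val
        · have hi2n := i.isLt
          rw [fraw_apply_top s _ _ ⟨i.val - n, by omega⟩
              (show cc n 2 ≤ i.val - n by omega) i (by show i.val = i.val - n + n; omega),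
            single_ne' hj _ (show i.val - n ≠ j.val by omega), map_one, inv_one]
        · by_cases hl : i.val < n - cc n 2
          · rw [fraw_apply_low s _ _ hn ⟨i.val + cc n 2, by omega⟩ (Nat.le_add_left _ _) i
              (by show i.val = i.val + cc n 2 - cc n 2; omega), Pi.one_apply, map_one, inv_one]
          · rw [fraw_apply_out s _ _ i hm ht hl]

lemma fraw_single_right (hn : 3 ≤ n) (s : ∀ (j : Fin n) (i : Fin (2 * n)), A j →* G i)
    (j : Fin n) (hj : j ∈ alphaN n 2) (b : A j) :
    fraw s (1, Pi.mulSingle ⟨j, hj⟩ b)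
      = Pi.mulSingle (⟨j.val, by have := j.isLt; omega⟩ : Fin (2 * n))
          (s j ⟨j.val, by have := j.isLt; omega⟩ b)
        * Pi.mulSingle (⟨j.val - cc n 2, by have := j.isLt; omega⟩ : Fin (2 * n))
            (s j ⟨j.val - cc n 2, by have := j.isLt; omega⟩ b⁻¹) := by
  have hc := (mem_alphaN2' j).1 hj
  have hjn := j.isLt
  obtain ⟨h2c, hclt, hc2⟩ := cc2_facts' hn
  have hj2 : j.val < 2 * n := by omega
  have hjc2 : j.val - cc n 2 < 2 * n := by omega
  funext i
  rw [Pi.mul_apply]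
  by_cases hij : i.val = j.val
  · have hE : i = ⟨j.val, hj2⟩ := Fin.ext hij
    subst hE
    rw [fraw_apply_mid s _ _ j hc _ rfl, single_same', Pi.one_apply, one_mul,
      Pi.mulSingle_eq_same,
      Pi.mulSingle_eq_of_ne (show (⟨j.val, hj2⟩ : Fin (2 * n)) ≠ ⟨j.val - cc n 2, hjc2⟩ by
        simp only [ne_eq, Fin.mk.injEq]; omega), mul_one]
  · by_cases hij2 : i.val = j.val - cc n 2
    · have hE : i = ⟨j.val - cc n 2, hjc2⟩ := Fin.ext hij2
      subst hE
      rw [fraw_apply_low s _ _ hn j hc _ rfl, single_same', ← map_inv,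
        Pi.mulSingle_eq_of_ne (show (⟨j.val - cc n 2, hjc2⟩ : Fin (2 * n)) ≠ ⟨j.val, hj2⟩ by
          simp only [ne_eq, Fin.mk.injEq]; omega), one_mul, Pi.mulSingle_eq_same]
    · rw [Pi.mulSingle_eq_of_ne (show i ≠ ⟨j.val, hj2⟩ from
          fun h => hij (congrArg Fin.val h)),
        Pi.mulSingle_eq_of_ne (show i ≠ ⟨j.val - cc n 2, hjc2⟩ from
          fun h => hij2 (congrArg Fin.val h)), one_mul]
      by_cases hm : cc n 2 ≤ i.val ∧ i.val < n
      · rw [fraw_apply_mid s _ _ ⟨i.val, hm.2⟩ hm.1 i rfl,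
          single_ne' hj _ (show i.val ≠ j.val from hij), Pi.one_apply, one_mul, map_one]
      · by_cases ht : n + cc n 2 ≤ i.val
        · have hi2n := i.isLt
          rw [fraw_apply_top s _ _ ⟨i.val - n, by omega⟩
              (show cc n 2 ≤ i.val - n by omega) i (by show i.val = i.val - n + n; omega),
            Pi.one_apply, map_one, inv_one]
        · by_cases hl : i.val < n - cc n 2
          · rw [fraw_apply_low s _ _ hn ⟨i.val + cc n 2, by omega⟩ (Nat.le_add_left _ _) i
              (by show i.val = i.val + cc n 2 - cc n 2; omega),
              single_ne' hj _ (show i.val + cc n 2 ≠ j.val by omega), map_one, inv_one]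
          · rw [fraw_apply_out s _ _ i hm ht hl]

/-- The bundled homomorphism. -/
def fhom (s : ∀ (j : Fin n) (i : Fin (2 * n)), A j →* G i) :
    ((∀ j : ↥(alphaN n 2), A j.1) × (∀ j : ↥(alphaN n 2), A j.1)) →* (∀ i, G i) :=
  MonoidHom.mk' (fraw s) (by
    intro p q
    funext i
    simp only [fraw, Pi.mul_apply, Prod.fst_mul, Prod.snd_mul]
    split_ifs with h1 h2 h3
    · rw [← map_mul, mul_mul_mul_comm]
    · rw [← map_inv, mul_inv, map_mul, map_inv, map_inv]
    · rw [← map_inv, mul_inv, map_mul, map_inv, map_inv]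
    · rw [one_mul])

lemma fhom_injective (hn : 3 ≤ n) (s : ∀ (j : Fin n) (i : Fin (2 * n)), A j →* G i)
    (hs1 : ∀ (j : Fin n) (i : Fin (2 * n)) (a : A j), s j i a = 1 → a = 1) :
    Function.Injective (fhom s) := by
  rw [injective_iff_map_eq_one]
  intro p hp
  obtain ⟨p₁, p₂⟩ := p
  have hp' : fraw s (p₁, p₂) = 1 := hp
  have h1 : ∀ x : ↥(alphaN n 2), p₁ x = 1 := by
    rintro ⟨j, hj⟩
    have hc := (mem_alphaN2' j).1 hj
    have hjn := j.isLt
    have e := fraw_apply_top s p₁ p₂ j hc ⟨j.val + n, by omega⟩ rfl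
    rw [hp'] at e
    have e2 : s j ⟨j.val + n, by omega⟩ (p₁ ⟨j, (mem_alphaN2' _).2 hc⟩) = 1 :=
      inv_eq_one.mp (e.symm.trans (Pi.one_apply _))
    exact hs1 _ _ _ e2
  have h2 : ∀ x : ↥(alphaN n 2), p₂ x = 1 := by
    rintro ⟨j, hj⟩
    have hc := (mem_alphaN2' j).1 hj
    have hjn := j.isLt
    have e := fraw_apply_mid s p₁ p₂ j hc ⟨j.val, by omega⟩ rfl
    rw [hp'] at e
    have e2 : p₁ ⟨j, (mem_alphaN2' _).2 hc⟩ * p₂ ⟨j, (mem_alphaN2' _).2 hc⟩ = 1 :=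
      hs1 _ _ _ (e.symm.trans (Pi.one_apply _))
    have e3 := h1 ⟨j, hj⟩
    rw [show p₁ ⟨j, (mem_alphaN2' _).2 hc⟩ = 1 from e3, one_mul] at e2
    exact e2
  rw [Prod.mk_eq_one]
  exact ⟨funext h1, funext h2⟩

lemma fhom_range (hn : 3 ≤ n) (s : ∀ (j : Fin n) (i : Fin (2 * n)), A j →* G i) :
    (fhom s).range = Subgroup.closure (⋃ j ∈ alphaN n 2,
      (Zbar s j (idx (lt_of_lt_of_le three_pos hn) j.val) (idx (lt_of_lt_of_le three_pos hn) (j.val + n))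
        ∪ Zbar s j (idx (lt_of_lt_of_le three_pos hn) j.val)
            (idx (lt_of_lt_of_le three_pos hn) (j.val - cc n 2)))) := by
  have h0 : 0 < n := by omega
  have hgen1 : ∀ (j : Fin n) (hj : j ∈ alphaN n 2) (b : A j),
      Pi.mulSingle (idx h0 j.val) (s j (idx h0 j.val) b)
        * Pi.mulSingle (idx h0 (j.val + n)) (s j (idx h0 (j.val + n)) b⁻¹)
      = fhom s (Pi.mulSingle ⟨j, hj⟩ b, 1) := by
    intro j hj b
    have hjn := j.isLt
    rw [idx_eq' _ (show j.val < 2 * n by omega),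
      idx_eq' _ (show j.val + n < 2 * n by omega)]
    exact (fraw_single_left hn s j hj b).symm
  have hgen2 : ∀ (j : Fin n) (hj : j ∈ alphaN n 2) (b : A j),
      Pi.mulSingle (idx h0 j.val) (s j (idx h0 j.val) b)
        * Pi.mulSingle (idx h0 (j.val - cc n 2)) (s j (idx h0 (j.val - cc n 2)) b⁻¹)
      = fhom s (1, Pi.mulSingle ⟨j, hj⟩ b) := by
    intro j hj b
    have hjn := j.isLt
    rw [idx_eq' _ (show j.val < 2 * n by omega),
      idx_eq' _ (show j.val - cc n 2 < 2 * n by omega)]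
    exact (fraw_single_right hn s j hj b).symm
  apply le_antisymm
  · rintro g ⟨p, rfl⟩
    obtain ⟨p₁, p₂⟩ := p
    have hsplit : (p₁, p₂)
        = (∏ x : ↥(alphaN n 2), ((Pi.mulSingle x (p₁ x), 1) :
            (∀ j : ↥(alphaN n 2), A j.1) × (∀ j : ↥(alphaN n 2), A j.1)))
          * ∏ x : ↥(alphaN n 2), ((1, Pi.mulSingle x (p₂ x)) :
            (∀ j : ↥(alphaN n 2), A j.1) × (∀ j : ↥(alphaN n 2), A j.1)) := by
      rw [Prod.ext_iff]
      constructor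
      · rw [Prod.fst_mul, Prod.fst_prod, Prod.fst_prod]
        simp only [Finset.univ_prod_mulSingle, Finset.prod_const_one, mul_one]
      · rw [Prod.snd_mul, Prod.snd_prod, Prod.snd_prod]
        simp only [Finset.univ_prod_mulSingle, Finset.prod_const_one, one_mul]
    have hmem : (p₁, p₂) ∈ Subgroup.comap (fhom s) (Subgroup.closure (⋃ j ∈ alphaN n 2,
        (Zbar s j (idx (lt_of_lt_of_le three_pos hn) j.val) (idx (lt_of_lt_of_le three_pos hn) (j.val + n))
          ∪ Zbar s j (idx (lt_of_lt_of_le three_pos hn) j.val)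
              (idx (lt_of_lt_of_le three_pos hn) (j.val - cc n 2))))) := by
      rw [hsplit]
      refine mul_mem (prod_mem ?_) (prod_mem ?_)
      · rintro ⟨j, hj⟩ -
        rw [Subgroup.mem_comap]
        exact Subgroup.subset_closure
          (Set.mem_biUnion hj (Set.mem_union_left _ ⟨p₁ ⟨j, hj⟩, hgen1 j hj _⟩))
      · rintro ⟨j, hj⟩ -
        rw [Subgroup.mem_comap]
        exact Subgroup.subset_closure
          (Set.mem_biUnion hj (Set.mem_union_right _ ⟨p₂ ⟨j, hj⟩, hgen2 j hj _⟩))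
    exact Subgroup.mem_comap.mp hmem
  · rw [Subgroup.closure_le]
    rintro g hg
    simp only [Set.mem_iUnion] at hg
    obtain ⟨j, hj, hg⟩ := hg
    rcases hg with h | h
    · obtain ⟨b, rfl⟩ := h
      exact ⟨(Pi.mulSingle ⟨j, hj⟩ b, 1), (hgen1 j hj b).symm⟩
    · obtain ⟨b, rfl⟩ := h
      exact ⟨(1, Pi.mulSingle ⟨j, hj⟩ b), (hgen2 j hj b).symm⟩

end Aux

theorem stmt_9
    (n : ℕ) (hn : 3 ≤ n)
    (A : Fin n → Type) [∀ j, CommGroup (A j)] [∀ j, Nontrivial (A j)]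
    [∀ j, Module.Free ℤ (Additive (A j))] [∀ j, Module.Finite ℤ (Additive (A j))]
    (G : Fin (2 * n) → Type) [∀ i, Group (G i)]
    (φ : ∀ i, G i →* (∀ j, A j)) (hφ : ∀ i, Function.Surjective (φ i))
    (s : ∀ (j : Fin n) (i : Fin (2 * n)), A j →* G i)
    (hs : ∀ j i a, φ i (s j i a) j = a)
    (Φ : (∀ i, G i) →* (∀ j, A j)) (hΦ : ∀ g, Φ g = ∏ i, φ i (g i))
    (Y : ∀ i, Set (G i)) (hYfin : ∀ i, (Y i).Finite)
    (hYker : ∀ i, ∀ y ∈ Y i, φ i y = 1)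
    (hYgen : ∀ i, Subgroup.closure (Y i ∪ ⋃ j, Set.range (s j i)) = ⊤)
    :
    Nonempty
      (↥(Subgroup.closure (⋃ j ∈ alphaN n 2,
            (Zbar s j (idx (by omega : 0 < n) j.val) (idx (by omega : 0 < n) (j.val + n))
              ∪ Zbar s j (idx (by omega : 0 < n) j.val)
                  (idx (by omega : 0 < n) (j.val - cc n 2)))))
        ≃* ((∀ j : ↥(alphaN n 2), A j.1) × (∀ j : ↥(alphaN n 2), A j.1))) := by
  have hs1 : ∀ (j : Fin n) (i : Fin (2 * n)) (a : A j), s j i a = 1 → a = 1 := by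
    intro j i a h
    have := hs j i a
    rw [h, map_one, Pi.one_apply] at this
    exact this.symm
  exact ⟨(MulEquiv.subgroupCongr (fhom_range hn s)).symm.trans
    (MonoidHom.ofInjective (fhom_injective hn s hs1)).symm⟩

end SB
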